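/- Let G be a finite abelian group, H ≤ G a subgroup, and A ⊆ H. Then A is spectral in G if and only if A is spectral in H. In particular, if Λ is a set of characters of H forming an orthogonal basis of the functions on A, then extending each character of H to a character of G yields a spectrum of A in G. -/

import Mathlib

/-- A finite subset `A` of an abelian group `G` is spectral if there is a set `Λ` of
characters of `G` with `|Λ| = |A|` such that any two distinct characters of `Λ` are
orthogonal when restricted to `A`. -/
def IsSpectral {G : Type*} [AddCommGroup G] (A : Finset G) : Prop :=
  ∃ Λ : Finset (AddChar G ℂ), Λ.card = A.card ∧
    ∀ χ ∈ Λ, ∀ ψ ∈ Λ, χ ≠ ψ → ∑ a ∈ A, χ a * (starRingEnd ℂ) (ψ a) = 0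

open Function

section Aux

variable {G : Type*} [AddCommGroup G] [Fintype G]

/-- The restriction of complex characters of a finite abelian group `G` to a subgroup `H`
is surjective, i.e. every character of `H` extends to a character of `G`. -/
private lemma res_surjective (H : AddSubgroup G) :
    Surjective (fun ψ : AddChar G ℂ => ψ.compAddMonoidHom H.subtype) := by
  classical
  set res : AddChar G ℂ →+ AddChar H ℂ :=
    { toFun := fun ψ => ψ.compAddMonoidHom H.subtype,
      map_zero' := rfl,
      map_add' := fun ψ χ => rfl } with hres
  -- the kernel of `res` injects into the characters of the quotient `G ⧸ H`
  have hkerinj : ∃ f : res.ker → AddChar (G ⧸ H) ℂ, Injective f := by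
    refine ⟨fun χ => AddChar.toAddMonoidHomEquiv.symm
      (QuotientAddGroup.lift H (AddChar.toAddMonoidHomEquiv (χ : AddChar G ℂ))
        (fun h hh => ?_)), ?_⟩
    · have h1 : (χ : AddChar G ℂ).compAddMonoidHom H.subtype = 0 := χ.2
      have := DFunLike.congr_fun h1 (⟨h, hh⟩ : H)
      simp only [AddChar.compAddMonoidHom_apply, AddSubgroup.coe_subtype,
        AddChar.zero_apply] at this
      simp [this]
    · intro χ₁ χ₂ h
      ext x
      have := DFunLike.congr_fun h ((x : G) : G ⧸ H)
      simpa using this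
  obtain ⟨f, hf⟩ := hkerinj
  letI : Fintype (G ⧸ H) := Fintype.ofFinite _
  letI : Fintype H := Fintype.ofFinite _
  haveI : Nonempty res.ker := ⟨0⟩
  haveI : Nonempty res.range := ⟨0⟩
  -- counting
  have hker : Nat.card res.ker ≤ Nat.card (G ⧸ H) := by
    calc Nat.card res.ker ≤ Nat.card (AddChar (G ⧸ H) ℂ) := Nat.card_le_card_of_injective f hf
    _ = Nat.card (G ⧸ H) := by
        rw [Nat.card_eq_fintype_card, Nat.card_eq_fintype_card, AddChar.card_eq]
  have hrange : Nat.card res.range ≤ Nat.card H := by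
    calc Nat.card res.range ≤ Nat.card (AddChar H ℂ) :=
          Nat.card_le_card_of_injective _ Subtype.val_injective
    _ = Nat.card H := by
        rw [Nat.card_eq_fintype_card, Nat.card_eq_fintype_card, AddChar.card_eq]
  have h1 : Nat.card (AddChar G ℂ) = Nat.card res.range * Nat.card res.ker := by
    rw [AddSubgroup.card_eq_card_quotient_mul_card_addSubgroup res.ker]
    congr 1
    exact Nat.card_congr (QuotientAddGroup.quotientKerEquivRange res).toEquiv
  have h2 : Nat.card G = Nat.card (G ⧸ H) * Nat.card H := by
    rw [AddSubgroup.card_eq_card_quotient_mul_card_addSubgroup H]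
  have h3 : Nat.card (AddChar G ℂ) = Nat.card G := by
    rw [Nat.card_eq_fintype_card, Nat.card_eq_fintype_card, AddChar.card_eq]
  have hHpos : 0 < Nat.card H := Nat.card_pos
  have hQpos : 0 < Nat.card (G ⧸ H) := Nat.card_pos
  have e : Nat.card res.range * Nat.card res.ker = Nat.card (G ⧸ H) * Nat.card H := by
    rw [← h1, h3, h2]
  have h4 : Nat.card (G ⧸ H) * Nat.card H ≤ Nat.card res.ker * Nat.card H := by
    calc Nat.card (G ⧸ H) * Nat.card H = Nat.card res.range * Nat.card res.ker := e.symm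
    _ ≤ Nat.card H * Nat.card res.ker := Nat.mul_le_mul_right _ hrange
    _ = Nat.card res.ker * Nat.card H := mul_comm _ _
  have hqk : Nat.card (G ⧸ H) ≤ Nat.card res.ker := Nat.le_of_mul_le_mul_right h4 hHpos
  have hkq : Nat.card res.ker = Nat.card (G ⧸ H) := le_antisymm hker hqk
  have key : Nat.card res.range = Nat.card H := by
    apply Nat.eq_of_mul_eq_mul_right hQpos
    rw [← hkq, e, hkq, mul_comm]
  have htop : res.range = ⊤ := by
    apply AddSubgroup.eq_top_of_card_eq
    rw [key, Nat.card_eq_fintype_card (α := AddChar H ℂ), AddChar.card_eq,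
      Nat.card_eq_fintype_card]
  exact AddMonoidHom.range_eq_top.mp htop

private lemma apply_mul_conj_self {χ : AddChar G ℂ} (x : G) :
    χ x * (starRingEnd ℂ) (χ x) = 1 := by
  rw [← AddChar.inv_apply_eq_conj]
  exact mul_inv_cancel₀ (by
    intro h
    have := AddChar.norm_apply χ x
    rw [h] at this
    simp at this)

end Aux

/-- For a subgroup `H` of a finite abelian group `G` and a finite set `A ⊆ H`,
`A` is spectral in `G` if and only if it is spectral in `H`. -/
theorem spectral_in_subgroup_iff {G : Type*} [AddCommGroup G] [Fintype G]
    (H : AddSubgroup G) (A : Finset H) :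
    IsSpectral (A.map ⟨fun x : H => (x : G), Subtype.val_injective⟩) ↔ IsSpectral A := by
  classical
  constructor
  · intro hsp
    rcases A.eq_empty_or_nonempty with rfl | hA
    · exact ⟨∅, by simp, by simp⟩
    obtain ⟨Λ, hcard, horth⟩ := hsp
    set r : AddChar G ℂ → AddChar H ℂ := fun ψ => ψ.compAddMonoidHom H.subtype with hr
    have hrapp : ∀ (ψ : AddChar G ℂ) (a : H), r ψ a = ψ (a : G) := fun _ _ => rfl
    have hinj : Set.InjOn r Λ := by
      intro χ hχ ψ hψ hrχψ
      by_contra hne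
      have h0 := horth χ hχ ψ hψ hne
      rw [Finset.sum_map] at h0
      have : ∀ a ∈ A, χ (((⟨(↑·), Subtype.val_injective⟩ : H ↪ G) a))
          * (starRingEnd ℂ) (ψ ((⟨(↑·), Subtype.val_injective⟩ : H ↪ G) a)) = 1 := by
        intro a _
        have hx : χ (a : G) = ψ (a : G) := by
          rw [← hrapp, ← hrapp, hrχψ]
        simp only [Function.Embedding.coeFn_mk]
        rw [hx]
        exact apply_mul_conj_self _
      rw [Finset.sum_congr rfl this, Finset.sum_const, nsmul_eq_mul, mul_one] at h0
      have := hA.card_pos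
      simp only [Nat.cast_eq_zero] at h0
      omega
    refine ⟨Λ.image r, ?_, ?_⟩
    · rw [Finset.card_image_of_injOn hinj, hcard, Finset.card_map]
    · intro χ' hχ' ψ' hψ' hne
      obtain ⟨χ, hχ, rfl⟩ := Finset.mem_image.mp hχ'
      obtain ⟨ψ, hψ, rfl⟩ := Finset.mem_image.mp hψ'
      have hne' : χ ≠ ψ := fun h => hne (by rw [h])
      have h0 := horth χ hχ ψ hψ hne'
      rw [Finset.sum_map] at h0
      simpa only [Function.Embedding.coeFn_mk, hrapp] using h0
  · intro hsp
    obtain ⟨Λ, hcard, horth⟩ := hsp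
    set s : AddChar H ℂ → AddChar G ℂ := surjInv (res_surjective H) with hs
    have hsec : ∀ (χ : AddChar H ℂ) (a : H), s χ (a : G) = χ a := by
      intro χ a
      have := surjInv_eq (res_surjective H) χ
      exact DFunLike.congr_fun this a
    have hsinj : Injective s := injective_surjInv _
    refine ⟨Λ.image s, ?_, ?_⟩
    · rw [Finset.card_image_of_injective _ hsinj, hcard, Finset.card_map]
    · intro χ' hχ' ψ' hψ' hne
      obtain ⟨χ, hχ, rfl⟩ := Finset.mem_image.mp hχ'
      obtain ⟨ψ, hψ, rfl⟩ := Finset.mem_image.mp hψ'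
      have hne' : χ ≠ ψ := fun h => hne (by rw [h])
      have h0 := horth χ hχ ψ hψ hne'
      rw [Finset.sum_map]
      simpa only [Function.Embedding.coeFn_mk, hsec] using h0
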